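/- Let F be a J-frame for a Krein space H with J-frame operator S, and define S₊ f = Σ_{i∈I₊} [f,f_i] f_i and S₋ f = Σ_{i∈I₋} [f,f_i] f_i. Then S₊ is the minimum (with respect to the order induced by J-positive operators) of the set of J-selfadjoint operators X with S ≤_J X and R(X) ⊆ M₊; and −S₋ is the maximum of the set of J-selfadjoint operators Y with Y ≤_J S and R(Y) ⊆ M₋. -/

import Mathlib

noncomputable section

open scoped Classical

open Function

/-- The indefinite inner product `[x,y] = ⟨Jx, y⟩` induced by an operator `J`. -/
def kre {E : Type*} [NormedAddCommGroup E] [InnerProductSpace ℂ E]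
    (J : E →L[ℂ] E) (x y : E) : ℂ := @inner ℂ _ _ (J x) y

/-- `J` is a fundamental symmetry: a selfadjoint unitary (involutive) operator. -/
def IsFundSym {E : Type*} [NormedAddCommGroup E] [InnerProductSpace ℂ E] [CompleteSpace E]
    (J : E →L[ℂ] E) : Prop :=
  IsSelfAdjoint J ∧ J.comp J = ContinuousLinearMap.id ℂ E

/-- The J-orthogonal companion of a subspace. -/
def JorthCompanion {E : Type*} [NormedAddCommGroup E] [InnerProductSpace ℂ E]
    (J : E →L[ℂ] E) (S : Submodule ℂ E) : Submodule ℂ E where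
  carrier := {x | ∀ s ∈ S, kre J x s = 0}
  zero_mem' := by intro s hs; simp [kre]
  add_mem' := by
    intro a b ha hb s hs
    have h1 := ha s hs
    have h2 := hb s hs
    simp only [kre, map_add, inner_add_left] at h1 h2 ⊢
    rw [h1, h2, add_zero]
  smul_mem' := by
    intro c x hx s hs
    have h1 := hx s hs
    simp only [kre, map_smul, inner_smul_left] at h1 ⊢
    rw [h1, mul_zero]

/-- Uniformly J-positive subspace. -/
def UnifJPos {E : Type*} [NormedAddCommGroup E] [InnerProductSpace ℂ E]
    (J : E →L[ℂ] E) (S : Submodule ℂ E) : Prop :=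
  ∃ α : ℝ, 0 < α ∧ ∀ x ∈ S, α * ‖x‖ ^ 2 ≤ (kre J x x).re

/-- Uniformly J-negative subspace. -/
def UnifJNeg {E : Type*} [NormedAddCommGroup E] [InnerProductSpace ℂ E]
    (J : E →L[ℂ] E) (S : Submodule ℂ E) : Prop :=
  ∃ α : ℝ, 0 < α ∧ ∀ x ∈ S, (kre J x x).re ≤ -(α * ‖x‖ ^ 2)

/-- Maximal uniformly J-positive subspace. -/
def MaxUnifJPos {E : Type*} [NormedAddCommGroup E] [InnerProductSpace ℂ E]
    (J : E →L[ℂ] E) (S : Submodule ℂ E) : Prop :=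
  UnifJPos J S ∧ ∀ S' : Submodule ℂ E, UnifJPos J S' → S ≤ S' → S' = S

/-- Maximal uniformly J-negative subspace. -/
def MaxUnifJNeg {E : Type*} [NormedAddCommGroup E] [InnerProductSpace ℂ E]
    (J : E →L[ℂ] E) (S : Submodule ℂ E) : Prop :=
  UnifJNeg J S ∧ ∀ S' : Submodule ℂ E, UnifJNeg J S' → S ≤ S' → S' = S

/-- J-selfadjoint operator (with respect to the indefinite inner product of `J`). -/
def IsJSelfAdj {E : Type*} [NormedAddCommGroup E] [InnerProductSpace ℂ E]
    (J : E →L[ℂ] E) (A : E →L[ℂ] E) : Prop :=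
  ∀ x y : E, kre J (A x) y = kre J x (A y)

/-- The J-order: `A ≤_J B` iff `B - A` is J-positive. -/
def JLe {E : Type*} [NormedAddCommGroup E] [InnerProductSpace ℂ E]
    (J : E →L[ℂ] E) (A B : E →L[ℂ] E) : Prop :=
  ∀ x : E, 0 ≤ (kre J (B x - A x) x).re ∧ (kre J (B x - A x) x).im = 0

/-- The subspace of `ℓ²(I)` supported on a subset (given by a predicate) of `I`. -/
def suppSub {I : Type*} (A : I → Prop) : Submodule ℂ (lp (fun _ : I => ℂ) 2) where
  carrier := {x | ∀ i, ¬ A i → x i = 0}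
  zero_mem' := by intro i _; rfl
  add_mem' := by
    intro a b ha hb i hi
    have : (↑(a + b) : ∀ i, ℂ) i = a i + b i := by
      rw [lp.coeFn_add]; rfl
    simp [this, ha i hi, hb i hi]
  smul_mem' := by
    intro c x hx i hi
    have : (↑(c • x) : ∀ i, ℂ) i = c • x i := by
      rw [lp.coeFn_smul]; rfl
    simp [this, hx i hi]

variable {H : Type*} [NormedAddCommGroup H] [InnerProductSpace ℂ H] [CompleteSpace H]
variable {I : Type*} [DecidableEq I]

/-- `i` is a "positive index" for the family `f` w.r.t. `J`: `[f i, f i] ≥ 0`. -/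
def posIdx {H : Type*} [NormedAddCommGroup H] [InnerProductSpace ℂ H]
    (J : H →L[ℂ] H) (f : I → H) (i : I) : Prop := 0 ≤ (kre J (f i) (f i)).re

/-- The sign `σ_i = sgn [f i, f i]` (as a complex scalar, `+1` on `I₊` and `-1` on `I₋`). -/
def sgnv {H : Type*} [NormedAddCommGroup H] [InnerProductSpace ℂ H]
    (J : H →L[ℂ] H) (f : I → H) (i : I) : ℂ := if posIdx J f i then 1 else -1

/-- Closure of the span of the vectors of the family `h` with positive indices (signs taken
from the family `f`). -/
def posSpan {H : Type*} [NormedAddCommGroup H] [InnerProductSpace ℂ H]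
    (J : H →L[ℂ] H) (f h : I → H) : Submodule ℂ H :=
  (Submodule.span ℂ {x | ∃ i, posIdx J f i ∧ h i = x}).topologicalClosure

/-- Closure of the span of the vectors of the family `h` with negative indices. -/
def negSpan {H : Type*} [NormedAddCommGroup H] [InnerProductSpace ℂ H]
    (J : H →L[ℂ] H) (f h : I → H) : Submodule ℂ H :=
  (Submodule.span ℂ {x | ∃ i, ¬ posIdx J f i ∧ h i = x}).topologicalClosure

/-- A Bessel family in a Hilbert space. -/
def IsBessel {H : Type*} [NormedAddCommGroup H] [InnerProductSpace ℂ H]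
    (g : I → H) : Prop :=
  ∃ β : ℝ, ∀ (x : H) (s : Finset I),
    ∑ i ∈ s, ‖@inner ℂ _ _ (g i) x‖ ^ 2 ≤ β * ‖x‖ ^ 2

/-- `g` is a dual family for `f`: the signs coincide and the two indefinite
reconstruction formulas hold. -/
def IsDualFamily {H : Type*} [NormedAddCommGroup H] [InnerProductSpace ℂ H]
    (J : H →L[ℂ] H) (f g : I → H) : Prop :=
  (∀ i, Real.sign ((kre J (g i) (g i)).re) = Real.sign ((kre J (f i) (f i)).re)) ∧
  (∀ x : H, HasSum (fun i => (sgnv J f i * kre J x (f i)) • g i) x) ∧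
  (∀ x : H, HasSum (fun i => (sgnv J f i * kre J x (g i)) • f i) x)


set_option maxHeartbeats 1600000

/-- `S₊ = TP₊T⁺` is the `≤_J`-minimum of the J-selfadjoint operators `X`
with `S ≤_J X` and `R(X) ⊆ M₊`, and `-S₋ = TP₋T⁺` is the `≤_J`-maximum of the
J-selfadjoint operators `Y` with `Y ≤_J S` and `R(Y) ⊆ M₋`. -/
theorem jframe_extremal_jpositive_parts
    (J : H →L[ℂ] H) (hJ : IsFundSym J) (f : I → H)
    (T : lp (fun _ : I => ℂ) 2 →L[ℂ] H)
    (hT : ∀ i, T (lp.single 2 i (1:ℂ)) = f i)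
    (hTsurj : Function.Surjective T)
    (Pp Pm : lp (fun _ : I => ℂ) 2 →L[ℂ] lp (fun _ : I => ℂ) 2)
    (hPp : ∀ (x : lp (fun _ : I => ℂ) 2) (i : I), Pp x i = if posIdx J f i then x i else 0)
    (hPm : ∀ (x : lp (fun _ : I => ℂ) 2) (i : I), Pm x i = if posIdx J f i then 0 else x i)
    (hJF : MaxUnifJPos J (LinearMap.range (T.comp Pp : lp (fun _ : I => ℂ) 2 →ₗ[ℂ] H)) ∧
      MaxUnifJNeg J (LinearMap.range (T.comp Pm : lp (fun _ : I => ℂ) 2 →ₗ[ℂ] H)))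
    (Tp : H →L[ℂ] lp (fun _ : I => ℂ) 2)
    (hTp : ∀ (x : lp (fun _ : I => ℂ) 2) (y : H), kre J (T x) y = kre (Pp - Pm) x (Tp y)) :
    (IsJSelfAdj J (T.comp (Pp.comp Tp)) ∧
      JLe J (T.comp Tp) (T.comp (Pp.comp Tp)) ∧
      LinearMap.range (T.comp (Pp.comp Tp) : H →ₗ[ℂ] H) ≤ LinearMap.range (T.comp Pp : lp (fun _ : I => ℂ) 2 →ₗ[ℂ] H) ∧
      (∀ X : H →L[ℂ] H, IsJSelfAdj J X → JLe J (T.comp Tp) X →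
        LinearMap.range (X : H →ₗ[ℂ] H) ≤ LinearMap.range (T.comp Pp : lp (fun _ : I => ℂ) 2 →ₗ[ℂ] H) →
          JLe J (T.comp (Pp.comp Tp)) X)) ∧
    (IsJSelfAdj J (T.comp (Pm.comp Tp)) ∧
      JLe J (T.comp (Pm.comp Tp)) (T.comp Tp) ∧
      LinearMap.range (T.comp (Pm.comp Tp) : H →ₗ[ℂ] H) ≤ LinearMap.range (T.comp Pm : lp (fun _ : I => ℂ) 2 →ₗ[ℂ] H) ∧
      (∀ Y : H →L[ℂ] H, IsJSelfAdj J Y → JLe J Y (T.comp Tp) →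
        LinearMap.range (Y : H →ₗ[ℂ] H) ≤ LinearMap.range (T.comp Pm : lp (fun _ : I => ℂ) 2 →ₗ[ℂ] H) →
          JLe J Y (T.comp (Pm.comp Tp)))) := by

  classical
  obtain ⟨hJsa, hJinv⟩ := hJ
  -- basic facts about J
  have hJJ : ∀ z : H, J (J z) = z := by
    intro z
    have h := ContinuousLinearMap.ext_iff.mp hJinv z
    simpa using h
  have hJmove : ∀ a b : H, inner (𝕜 := ℂ) (J a) b = inner (𝕜 := ℂ) a (J b) := by
    intro a b
    conv_lhs => rw [← hJsa.adjoint_eq]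
    exact ContinuousLinearMap.adjoint_inner_left J b a
  have hkconj : ∀ a b : H, kre J a b = (starRingEnd ℂ) (kre J b a) := by
    intro a b
    calc kre J a b = inner (𝕜 := ℂ) a (J b) := hJmove a b
      _ = (starRingEnd ℂ) (inner (𝕜 := ℂ) (J b) a) := (inner_conj_symm a (J b)).symm
      _ = (starRingEnd ℂ) (kre J b a) := rfl
  have kre_sub : ∀ a b c : H, kre J (a - b) c = kre J a c - kre J b c := by
    intro a b c; simp only [kre, map_sub, inner_sub_left]
  have kre_add : ∀ a b c : H, kre J (a + b) c = kre J a c + kre J b c := by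
    intro a b c; simp only [kre, map_add, inner_add_left]
  -- coordinatewise facts about Pp, Pm
  have hPpPm : ∀ u : lp (fun _ : I => ℂ) 2, Pp u + Pm u = u := by
    intro u
    apply lp.ext; funext i
    have h1 : (↑(Pp u + Pm u) : ∀ _ : I, ℂ) i = Pp u i + Pm u i := by
      rw [lp.coeFn_add]; rfl
    rw [h1, hPp, hPm]
    by_cases h : posIdx J f i <;> simp [h]
  have hPdp : ∀ u : lp (fun _ : I => ℂ) 2, (Pp - Pm) (Pp u) = Pp u := by
    intro u
    apply lp.ext; funext i
    rw [ContinuousLinearMap.sub_apply]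
    have h1 : (↑(Pp (Pp u) - Pm (Pp u)) : ∀ _ : I, ℂ) i = Pp (Pp u) i - Pm (Pp u) i := by
      rw [lp.coeFn_sub]; rfl
    rw [h1, hPp, hPm, hPp]
    by_cases h : posIdx J f i <;> simp [h]
  have hPdm : ∀ u : lp (fun _ : I => ℂ) 2, (Pp - Pm) (Pm u) = -(Pm u) := by
    intro u
    apply lp.ext; funext i
    rw [ContinuousLinearMap.sub_apply]
    have h1 : (↑(Pp (Pm u) - Pm (Pm u)) : ∀ _ : I, ℂ) i = Pp (Pm u) i - Pm (Pm u) i := by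
      rw [lp.coeFn_sub]; rfl
    have h2 : (↑(-(Pm u)) : ∀ _ : I, ℂ) i = -(Pm u i) := by
      rw [lp.coeFn_neg]; rfl
    rw [h1, h2]
    simp only [hPp, hPm]
    by_cases h : posIdx J f i <;> simp [h]
  have hPp_idem : ∀ u : lp (fun _ : I => ℂ) 2, Pp (Pp u) = Pp u := by
    intro u
    apply lp.ext; funext i
    rw [hPp, hPp]
    by_cases h : posIdx J f i <;> simp [h]
  have hPm_idem : ∀ u : lp (fun _ : I => ℂ) 2, Pm (Pm u) = Pm u := by
    intro u
    apply lp.ext; funext i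
    rw [hPm, hPm]
    by_cases h : posIdx J f i <;> simp [h]
  have hPp_sa : ∀ a b : lp (fun _ : I => ℂ) 2,
      inner (𝕜 := ℂ) (Pp a) b = inner (𝕜 := ℂ) a (Pp b) := by
    intro a b
    rw [lp.inner_eq_tsum, lp.inner_eq_tsum]
    refine tsum_congr fun i => ?_
    rw [hPp, hPp]
    by_cases h : posIdx J f i <;> simp [h]
  have hPm_sa : ∀ a b : lp (fun _ : I => ℂ) 2,
      inner (𝕜 := ℂ) (Pm a) b = inner (𝕜 := ℂ) a (Pm b) := by
    intro a b
    rw [lp.inner_eq_tsum, lp.inner_eq_tsum]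
    refine tsum_congr fun i => ?_
    rw [hPm, hPm]
    by_cases h : posIdx J f i <;> simp [h]
  have hPpself : ∀ u : lp (fun _ : I => ℂ) 2,
      inner (𝕜 := ℂ) (Pp u) u = ((‖Pp u‖ : ℂ)) ^ 2 := by
    intro u
    calc inner (𝕜 := ℂ) (Pp u) u = inner (𝕜 := ℂ) (Pp (Pp u)) u := by rw [hPp_idem]
      _ = inner (𝕜 := ℂ) (Pp u) (Pp u) := hPp_sa (Pp u) u
      _ = ((‖Pp u‖ : ℂ)) ^ 2 := inner_self_eq_norm_sq_to_K _
  have hPmself : ∀ u : lp (fun _ : I => ℂ) 2,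
      inner (𝕜 := ℂ) (Pm u) u = ((‖Pm u‖ : ℂ)) ^ 2 := by
    intro u
    calc inner (𝕜 := ℂ) (Pm u) u = inner (𝕜 := ℂ) (Pm (Pm u)) u := by rw [hPm_idem]
      _ = inner (𝕜 := ℂ) (Pm u) (Pm u) := hPm_sa (Pm u) u
      _ = ((‖Pm u‖ : ℂ)) ^ 2 := inner_self_eq_norm_sq_to_K _
  -- kre formulas for T
  have hTkre : ∀ (u : lp (fun _ : I => ℂ) 2) (y : H),
      kre J (T u) y = inner (𝕜 := ℂ) ((Pp - Pm) u) (Tp y) := fun u y => hTp u y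
  have hSp_kre : ∀ (u : lp (fun _ : I => ℂ) 2) (y : H),
      kre J (T (Pp u)) y = inner (𝕜 := ℂ) (Pp u) (Tp y) := by
    intro u y; rw [hTkre, hPdp]
  have hSm_kre : ∀ (u : lp (fun _ : I => ℂ) 2) (y : H),
      kre J (T (Pm u)) y = -inner (𝕜 := ℂ) (Pm u) (Tp y) := by
    intro u y; rw [hTkre, hPdm, inner_neg_left]
  -- J-selfadjointness of the two parts
  have hSpsa : IsJSelfAdj J (T.comp (Pp.comp Tp)) := by
    intro x y
    show kre J (T (Pp (Tp x))) y = kre J x (T (Pp (Tp y)))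
    rw [hSp_kre, hkconj x (T (Pp (Tp y))), hSp_kre]
    rw [inner_conj_symm (Tp x) (Pp (Tp y))]
    exact hPp_sa (Tp x) (Tp y)
  have hSmsa : IsJSelfAdj J (T.comp (Pm.comp Tp)) := by
    intro x y
    show kre J (T (Pm (Tp x))) y = kre J x (T (Pm (Tp y)))
    rw [hSm_kre, hkconj x (T (Pm (Tp y))), hSm_kre, map_neg]
    rw [inner_conj_symm (Tp x) (Pm (Tp y))]
    rw [hPm_sa (Tp x) (Tp y)]
  -- the two easy JLe statements
  have hA2 : JLe J (T.comp Tp) (T.comp (Pp.comp Tp)) := by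
    intro x
    have hsub : ∀ u : lp (fun _ : I => ℂ) 2, Pp u - u = -(Pm u) := by
      intro u
      rw [eq_neg_iff_add_eq_zero, sub_add_eq_add_sub, sub_eq_zero, hPpPm]
    have heq : kre J ((T.comp (Pp.comp Tp)) x - (T.comp Tp) x) x = ((‖Pm (Tp x)‖ : ℂ)) ^ 2 := by
      have h1 : (T.comp (Pp.comp Tp)) x - (T.comp Tp) x = -(T (Pm (Tp x))) := by
        show T (Pp (Tp x)) - T (Tp x) = -(T (Pm (Tp x)))
        rw [← map_sub, ← map_neg]
        exact congrArg T (hsub (Tp x))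
      rw [h1]
      have h2 : kre J (-(T (Pm (Tp x)))) x = -(kre J (T (Pm (Tp x))) x) := by
        simp only [kre, map_neg, inner_neg_left]
      rw [h2, hSm_kre, neg_neg, hPmself]
    rw [heq]
    constructor
    · rw [← Complex.ofReal_pow, Complex.ofReal_re]
      positivity
    · rw [← Complex.ofReal_pow, Complex.ofReal_im]
  have hB2 : JLe J (T.comp (Pm.comp Tp)) (T.comp Tp) := by
    intro x
    have hsub : ∀ u : lp (fun _ : I => ℂ) 2, u - Pm u = Pp u := by
      intro u
      rw [sub_eq_iff_eq_add]
      exact (hPpPm u).symm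
    have heq : kre J ((T.comp Tp) x - (T.comp (Pm.comp Tp)) x) x = ((‖Pp (Tp x)‖ : ℂ)) ^ 2 := by
      have h1 : (T.comp Tp) x - (T.comp (Pm.comp Tp)) x = T (Pp (Tp x)) := by
        show T (Tp x) - T (Pm (Tp x)) = T (Pp (Tp x))
        rw [← map_sub]
        exact congrArg T (hsub (Tp x))
      rw [h1, hSp_kre, hPpself]
    rw [heq]
    constructor
    · rw [← Complex.ofReal_pow, Complex.ofReal_re]
      positivity
    · rw [← Complex.ofReal_pow, Complex.ofReal_im]
  -- ranges
  have hA3 : LinearMap.range (T.comp (Pp.comp Tp) : H →ₗ[ℂ] H) ≤ LinearMap.range (T.comp Pp : lp (fun _ : I => ℂ) 2 →ₗ[ℂ] H) := by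
    intro y hy
    obtain ⟨x, rfl⟩ := LinearMap.mem_range.mp hy
    exact LinearMap.mem_range.mpr ⟨Tp x, rfl⟩
  have hB3 : LinearMap.range (T.comp (Pm.comp Tp) : H →ₗ[ℂ] H) ≤ LinearMap.range (T.comp Pm : lp (fun _ : I => ℂ) 2 →ₗ[ℂ] H) := by
    intro y hy
    obtain ⟨x, rfl⟩ := LinearMap.mem_range.mp hy
    exact LinearMap.mem_range.mpr ⟨Tp x, rfl⟩
  -- the subspaces M₊ and M₋
  set Mp := LinearMap.range (T.comp Pp : lp (fun _ : I => ℂ) 2 →ₗ[ℂ] H) with hMpdef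
  set Mm := LinearMap.range (T.comp Pm : lp (fun _ : I => ℂ) 2 →ₗ[ℂ] H) with hMmdef
  obtain ⟨⟨α, hα, hposM⟩, hmaxp⟩ := hJF.1
  obtain ⟨⟨β, hβ, hnegM⟩, hmaxm⟩ := hJF.2
  have hre_cont : Continuous fun x : H => (kre J x x).re := by
    simp only [kre]
    exact Complex.continuous_re.comp (J.continuous.inner continuous_id)
  have hnorm_cont : Continuous fun x : H => ‖x‖ ^ 2 := by
    exact continuous_norm.pow 2
  -- M₊ is closed
  have hMp_closed : IsClosed (Mp : Set H) := by
    have hcl : IsClosed {x : H | α * ‖x‖ ^ 2 ≤ (kre J x x).re} :=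
      isClosed_le (continuous_const.mul hnorm_cont) hre_cont
    have hsub : (Mp : Set H) ⊆ {x : H | α * ‖x‖ ^ 2 ≤ (kre J x x).re} := fun x hx => hposM x hx
    have h1 : UnifJPos J Mp.topologicalClosure := by
      refine ⟨α, hα, fun x hx => ?_⟩
      have hx' : x ∈ closure (Mp : Set H) := by
        rwa [← Submodule.topologicalClosure_coe Mp]
      exact (hcl.closure_subset_iff.mpr hsub) hx'
    have h2 := hmaxp Mp.topologicalClosure h1 (Submodule.le_topologicalClosure Mp)
    have h3 := Mp.isClosed_topologicalClosure
    rwa [h2] at h3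
  have hMm_closed : IsClosed (Mm : Set H) := by
    have hcl : IsClosed {x : H | (kre J x x).re ≤ -(β * ‖x‖ ^ 2)} :=
      isClosed_le hre_cont (continuous_const.mul hnorm_cont).neg
    have hsub : (Mm : Set H) ⊆ {x : H | (kre J x x).re ≤ -(β * ‖x‖ ^ 2)} := fun x hx => hnegM x hx
    have h1 : UnifJNeg J Mm.topologicalClosure := by
      refine ⟨β, hβ, fun x hx => ?_⟩
      have hx' : x ∈ closure (Mm : Set H) := by
        rwa [← Submodule.topologicalClosure_coe Mm]
      exact (hcl.closure_subset_iff.mpr hsub) hx'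
    have h2 := hmaxm Mm.topologicalClosure h1 (Submodule.le_topologicalClosure Mm)
    have h3 := Mm.isClosed_topologicalClosure
    rwa [h2] at h3
  -- M₊ ∩ M₋ = 0
  have hMpMm : ∀ x : H, x ∈ Mp → x ∈ Mm → x = 0 := by
    intro x h1 h2
    have e1 := hposM x h1
    have e2 := hnegM x h2
    have h0 : ‖x‖ ^ 2 ≤ 0 := by nlinarith
    have h0' : ‖x‖ ^ 2 = 0 := le_antisymm h0 (sq_nonneg _)
    have : ‖x‖ = 0 := by
      have := pow_eq_zero_iff (n := 2) (by norm_num) |>.mp h0'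
      exact this
    exact norm_eq_zero.mp this
  haveI : CompleteSpace Mp := hMp_closed.completeSpace_coe
  haveI : CompleteSpace Mm := hMm_closed.completeSpace_coe
  -- the projection Q onto M₊ along M₋
  set Φ : (Mp × Mm) →L[ℂ] H :=
    Mp.subtypeL.comp (ContinuousLinearMap.fst ℂ Mp Mm) +
      Mm.subtypeL.comp (ContinuousLinearMap.snd ℂ Mp Mm) with hΦdef
  have hΦ : ∀ p : Mp × Mm, Φ p = (p.1 : H) + (p.2 : H) := fun p => rfl
  have hker : LinearMap.ker (Φ : Mp × Mm →ₗ[ℂ] H) = ⊥ := by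
    rw [LinearMap.ker_eq_bot']
    intro p hp
    rw [ContinuousLinearMap.coe_coe, hΦ] at hp
    have h1 : (p.1 : H) ∈ Mm := by
      have he : (p.1 : H) = -(p.2 : H) := eq_neg_of_add_eq_zero_left hp
      rw [he]; exact Mm.neg_mem p.2.2
    have h0 : (p.1 : H) = 0 := hMpMm _ p.1.2 h1
    have h2 : (p.2 : H) = 0 := by rw [h0, zero_add] at hp; exact hp
    exact Prod.ext (Subtype.ext h0) (Subtype.ext h2)
  have hrange : LinearMap.range (Φ : Mp × Mm →ₗ[ℂ] H) = ⊤ := by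
    rw [LinearMap.range_eq_top]
    intro x
    obtain ⟨c, rfl⟩ := hTsurj x
    refine ⟨(⟨T (Pp c), LinearMap.mem_range.mpr ⟨c, rfl⟩⟩,
      ⟨T (Pm c), LinearMap.mem_range.mpr ⟨c, rfl⟩⟩), ?_⟩
    rw [ContinuousLinearMap.coe_coe, hΦ]
    show T (Pp c) + T (Pm c) = T c
    rw [← map_add, hPpPm]
  set Φe := ContinuousLinearEquiv.ofBijective Φ hker hrange with hΦedef
  set Q : H →L[ℂ] H :=
    Mp.subtypeL.comp ((ContinuousLinearMap.fst ℂ Mp Mm).comp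
      (Φe.symm : H →L[ℂ] Mp × Mm)) with hQdef
  have hQ : ∀ x : H, Q x = ((Φe.symm x).1 : H) := fun x => rfl
  have hΦe : ∀ p : Mp × Mm, Φe p = Φ p := fun p => rfl
  have hQp : ∀ x ∈ Mp, Q x = x := by
    intro x hx
    have h1 : Φe ((⟨x, hx⟩ : Mp), (0 : Mm)) = x := by
      rw [hΦe, hΦ]; simp
    have h2 : Φe.symm x = ((⟨x, hx⟩ : Mp), (0 : Mm)) :=
      Φe.symm_apply_eq.mpr h1.symm
    rw [hQ, h2]
  have hQm : ∀ x ∈ Mm, Q x = 0 := by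
    intro x hx
    have h1 : Φe ((0 : Mp), (⟨x, hx⟩ : Mm)) = x := by
      rw [hΦe, hΦ]; simp
    have h2 : Φe.symm x = ((0 : Mp), (⟨x, hx⟩ : Mm)) :=
      Φe.symm_apply_eq.mpr h1.symm
    rw [hQ, h2]
    simp
  -- the J-adjoint projection applied pointwise
  set q : H → H := fun x => J ((ContinuousLinearMap.adjoint Q) (J x)) with hqdef
  have hq : ∀ m x : H, kre J m (q x) = kre J (Q m) x := by
    intro m x
    calc kre J m (q x)
        = inner (𝕜 := ℂ) m ((ContinuousLinearMap.adjoint Q) (J x)) := by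
          show inner (𝕜 := ℂ) (J m) (J ((ContinuousLinearMap.adjoint Q) (J x))) = _
          rw [hJmove, hJJ]
      _ = inner (𝕜 := ℂ) (Q m) (J x) := ContinuousLinearMap.adjoint_inner_right Q m (J x)
      _ = kre J (Q m) x := by
          show _ = inner (𝕜 := ℂ) (J (Q m)) x
          rw [hJmove]
  have hqp : ∀ x m : H, m ∈ Mp → kre J m (q x) = kre J m x := by
    intro x m hm; rw [hq, hQp m hm]
  have hqm : ∀ x m : H, m ∈ Mm → kre J m (q x) = 0 := by
    intro x m hm; rw [hq, hQm m hm]; simp [kre]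
  have hqp' : ∀ x m : H, m ∈ Mp → kre J (q x) m = kre J x m := by
    intro x m hm; rw [hkconj, hqp x m hm, ← hkconj]
  have hqm2 : ∀ x m : H, m ∈ Mm → kre J m (x - q x) = kre J m x := by
    intro x m hm
    have h1 : kre J m (x - q x) = kre J m x - kre J m (q x) := by
      simp only [kre, inner_sub_right]
    rw [h1, hqm x m hm, sub_zero]
  have hqp2 : ∀ x m : H, m ∈ Mp → kre J m (x - q x) = 0 := by
    intro x m hm
    have h1 : kre J m (x - q x) = kre J m x - kre J m (q x) := by
      simp only [kre, inner_sub_right]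
    rw [h1, hqp x m hm, sub_self]
  have hqm2' : ∀ x m : H, m ∈ Mm → kre J (x - q x) m = kre J x m := by
    intro x m hm; rw [hkconj, hqm2 x m hm, ← hkconj]
  -- decomposition of S
  have hSdecomp : ∀ z : H, (T.comp Tp) z = T (Pp (Tp z)) + T (Pm (Tp z)) := by
    intro z
    show T (Tp z) = _
    rw [← map_add, hPpPm]
  have hSp_mem : ∀ z : H, T (Pp (Tp z)) ∈ Mp := fun z => LinearMap.mem_range.mpr ⟨Tp z, rfl⟩
  have hSm_mem : ∀ z : H, T (Pm (Tp z)) ∈ Mm := fun z => LinearMap.mem_range.mpr ⟨Tp z, rfl⟩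
  -- minimality of S₊
  have hA4 : ∀ X : H →L[ℂ] H, IsJSelfAdj J X → JLe J (T.comp Tp) X →
      LinearMap.range (X : H →ₗ[ℂ] H) ≤ Mp → JLe J (T.comp (Pp.comp Tp)) X := by
    intro X hXsa hXge hXr x
    set b := q x with hb
    have hXb : X b ∈ Mp := hXr (LinearMap.mem_range.mpr ⟨b, rfl⟩)
    have hXx : X x ∈ Mp := hXr (LinearMap.mem_range.mpr ⟨x, rfl⟩)
    have cA : kre J (X b) b = kre J (X x) x := by
      calc kre J (X b) b = kre J b (X b) := hXsa b b
        _ = kre J x (X b) := hqp' x (X b) hXb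
        _ = kre J (X x) b := (hXsa x b).symm
        _ = kre J (X x) x := hqp x (X x) hXx
    have cB : kre J ((T.comp Tp) b) b = kre J ((T.comp (Pp.comp Tp)) x) x := by
      have h1 : kre J ((T.comp Tp) b) b
          = kre J (T (Pp (Tp b))) b + kre J (T (Pm (Tp b))) b := by
        rw [hSdecomp b, kre_add]
      rw [h1, hqm x (T (Pm (Tp b))) (hSm_mem b), add_zero]
      calc kre J (T (Pp (Tp b))) b = kre J (T (Pp (Tp b))) x := hqp x _ (hSp_mem b)
        _ = kre J b ((T.comp (Pp.comp Tp)) x) := hSpsa b x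
        _ = kre J x ((T.comp (Pp.comp Tp)) x) := hqp' x _ (hSp_mem x)
        _ = kre J ((T.comp (Pp.comp Tp)) x) x := (hSpsa x x).symm
    have key : kre J (X x - (T.comp (Pp.comp Tp)) x) x
        = kre J (X b - (T.comp Tp) b) b := by
      rw [kre_sub, kre_sub, cA, cB]
    rw [key]
    exact hXge b
  -- maximality of -S₋
  have hB4 : ∀ Y : H →L[ℂ] H, IsJSelfAdj J Y → JLe J Y (T.comp Tp) →
      LinearMap.range (Y : H →ₗ[ℂ] H) ≤ Mm → JLe J Y (T.comp (Pm.comp Tp)) := by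
    intro Y hYsa hYle hYr x
    set b := x - q x with hb
    have hYb : Y b ∈ Mm := hYr (LinearMap.mem_range.mpr ⟨b, rfl⟩)
    have hYx : Y x ∈ Mm := hYr (LinearMap.mem_range.mpr ⟨x, rfl⟩)
    have cA : kre J (Y b) b = kre J (Y x) x := by
      calc kre J (Y b) b = kre J b (Y b) := hYsa b b
        _ = kre J x (Y b) := hqm2' x (Y b) hYb
        _ = kre J (Y x) b := (hYsa x b).symm
        _ = kre J (Y x) x := hqm2 x (Y x) hYx
    have cB : kre J ((T.comp Tp) b) b = kre J ((T.comp (Pm.comp Tp)) x) x := by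
      have h1 : kre J ((T.comp Tp) b) b
          = kre J (T (Pp (Tp b))) b + kre J (T (Pm (Tp b))) b := by
        rw [hSdecomp b, kre_add]
      rw [h1, hqp2 x (T (Pp (Tp b))) (hSp_mem b), zero_add]
      calc kre J (T (Pm (Tp b))) b = kre J (T (Pm (Tp b))) x := hqm2 x _ (hSm_mem b)
        _ = kre J b ((T.comp (Pm.comp Tp)) x) := hSmsa b x
        _ = kre J x ((T.comp (Pm.comp Tp)) x) := hqm2' x _ (hSm_mem x)
        _ = kre J ((T.comp (Pm.comp Tp)) x) x := (hSmsa x x).symm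
    have key : kre J ((T.comp (Pm.comp Tp)) x - Y x) x
        = kre J ((T.comp Tp) b - Y b) b := by
      rw [kre_sub, kre_sub, cA, cB]
    rw [key]
    exact hYle b
  exact ⟨⟨hSpsa, hA2, hA3, hA4⟩, ⟨hSmsa, hB2, hB3, hB4⟩⟩
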